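/- Let 𝔖 be an interval system on X, V, W, Z complete Hausdorff commutative topological groups, L : V × W → Z biadditive and continuous in its second variable, and μ : 𝔖 → W a measure. Let A ∈ 𝔖, let A = ⋃_{λ∈Λ} A_λ be a countable pairwise disjoint decomposition with A_λ ∈ 𝔖, and let c ∈ V. Then for every neighborhood T of 0 in Z there exists a finite set Ξ ⊆ Λ such that svar(L, c, ⋃_{λ∈Λ\Ξ} A_λ, μ) ⊆ T. -/

import Mathlib

/-- A family `S` of subsets of `X` is an *interval system* if for all `A, B ∈ S` there exist
countable pairwise disjoint families `D₁, D₂ ⊆ S` with `⋃₀ D₁ = A \ B` and `⋃₀ D₂ = A ∩ B`. -/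
def IsIntervalSystem {X : Type*} (S : Set (Set X)) : Prop :=
  ∀ A ∈ S, ∀ B ∈ S,
    (∃ D : Set (Set X), D ⊆ S ∧ D.Countable ∧ D.PairwiseDisjoint id ∧ ⋃₀ D = A \ B) ∧
    (∃ D : Set (Set X), D ⊆ S ∧ D.Countable ∧ D.PairwiseDisjoint id ∧ ⋃₀ D = A ∩ B)

/-- A map `μ` defined on the sets of `X`, with values in a commutative topological group, is
a *measure* on the set system `S` if it is σ-additive on `S`: whenever a member `B` of `S`
is the union of a countable pairwise disjoint family `(A i)` of members of `S`, the net of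
finite partial sums `∑ i ∈ Ξ, μ (A i)` (over finite `Ξ`, directed by inclusion) converges
to `μ B`, i.e. `HasSum (fun i => μ (A i)) (μ B)`. -/
def IsAddMeasure {X W : Type*} [AddCommMonoid W] [TopologicalSpace W]
    (S : Set (Set X)) (μ : Set X → W) : Prop :=
  ∀ (ι : Type) (A : ι → Set X) (B : Set X), Countable ι → B ∈ S →
    (∀ i, A i ∈ S) → (Pairwise fun i j => Disjoint (A i) (A j)) →
    (⋃ i, A i) = B → HasSum (fun i => μ (A i)) (μ B)

/-- The semivariation `svar(L, c, B, μ)`: the closure of the set of all sums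
`∑ j, L c (μ (E j))` over finite pairwise disjoint families of members of `S`
contained in `B`. -/
def svarSet {X V W Z : Type*} [AddCommMonoid Z] [TopologicalSpace Z]
    (S : Set (Set X)) (L : V → W → Z) (μ : Set X → W) (c : V) (B : Set X) : Set Z :=
  closure { z : Z | ∃ (n : ℕ) (E : Fin n → Set X),
    (∀ j, E j ∈ S) ∧ (∀ j, E j ⊆ B) ∧ (Pairwise fun i j => Disjoint (E i) (E j)) ∧
    z = ∑ j, L c (μ (E j)) }

open Set Function

/-- Auxiliary: a countable pairwise disjoint cover of `G` by nonempty members of `S`. -/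
def IsCC {X : Type*} (S : Set (Set X)) (G : Set X) (D : Set (Set X)) : Prop :=
  D ⊆ S ∧ D.Countable ∧ D.PairwiseDisjoint id ∧ ⋃₀ D = G ∧ ∅ ∉ D

lemma cc_prune {X : Type*} {S : Set (Set X)} {G : Set X} (D : Set (Set X))
    (hDS : D ⊆ S) (hDc : D.Countable) (hDd : D.PairwiseDisjoint id) (hDu : ⋃₀ D = G) :
    ∃ D', IsCC S G D' := by
  refine ⟨D \ {∅}, (diff_subset).trans hDS, hDc.mono diff_subset, hDd.subset diff_subset, ?_,
    by simp⟩
  rw [← hDu]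
  apply subset_antisymm (sUnion_subset_sUnion diff_subset)
  rintro x ⟨t, htD, hxt⟩
  exact ⟨t, ⟨htD, by rintro rfl; exact hxt⟩, hxt⟩

lemma cc_of_diff {X : Type*} {S : Set (Set X)} (hS : IsIntervalSystem S) {A B : Set X}
    (hA : A ∈ S) (hB : B ∈ S) : ∃ D, IsCC S (A \ B) D := by
  obtain ⟨D, h1, h2, h3, h4⟩ := (hS A hA B hB).1
  exact cc_prune D h1 h2 h3 h4

lemma cc_of_inter {X : Type*} {S : Set (Set X)} (hS : IsIntervalSystem S) {A B : Set X}
    (hA : A ∈ S) (hB : B ∈ S) : ∃ D, IsCC S (A ∩ B) D := by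
  obtain ⟨D, h1, h2, h3, h4⟩ := (hS A hA B hB).2
  exact cc_prune D h1 h2 h3 h4

lemma cc_base {X : Type*} {S : Set (Set X)} {A : Set X} (hA : A ∈ S) :
    ∃ D, IsCC S A D := by
  refine cc_prune {A} ?_ (countable_singleton A) ?_ (sUnion_singleton A)
  · simpa using hA
  · simp [PairwiseDisjoint]

lemma cc_iUnion {X : Type*} {S : Set (Set X)} {κ : Type*} [Countable κ]
    (G : κ → Set X) (D : κ → Set (Set X)) (h : ∀ k, IsCC S (G k) (D k))
    (hd : Pairwise fun a b => Disjoint (G a) (G b)) :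
    IsCC S (⋃ k, G k) (⋃ k, D k) := by
  have hsub : ∀ k, ∀ d ∈ D k, d ⊆ G k := fun k d hd' => (h k).2.2.2.1 ▸ subset_sUnion_of_mem hd'
  refine ⟨iUnion_subset fun k => (h k).1, countable_iUnion fun k => (h k).2.1, ?_, ?_, ?_⟩
  · intro x hx y hy hxy
    obtain ⟨k, hk⟩ := mem_iUnion.mp hx
    obtain ⟨k', hk'⟩ := mem_iUnion.mp hy
    rcases eq_or_ne k k' with rfl | hkk'
    · exact (h k).2.2.1 hk hk' hxy
    · exact (hd hkk').mono (hsub k x hk) (hsub k' y hk')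
  · rw [sUnion_iUnion]
    exact iUnion_congr fun k => (h k).2.2.2.1
  · intro hmem
    obtain ⟨k, hk⟩ := mem_iUnion.mp hmem
    exact (h k).2.2.2.2 hk

lemma cc_diff {X : Type*} {S : Set (Set X)} (hS : IsIntervalSystem S) {G E : Set X}
    {D : Set (Set X)} (hcc : IsCC S G D) (hE : E ∈ S) : ∃ D', IsCC S (G \ E) D' := by
  have : Countable ↥D := hcc.2.1.to_subtype
  have hch : ∀ d : D, ∃ Dd, IsCC S (↑d \ E) Dd := fun d => cc_of_diff hS (hcc.1 d.2) hE
  choose DD hDD using hch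
  refine ⟨⋃ d, DD d, ?_⟩
  have h1 : IsCC S (⋃ d : D, (↑d \ E)) (⋃ d, DD d) := by
    refine cc_iUnion _ _ hDD ?_
    intro a b hab
    exact ((hcc.2.2.1 a.2 b.2 (fun h => hab (Subtype.ext h))).mono diff_subset diff_subset)
  have h2 : (⋃ d : D, ((d : Set X) \ E)) = G \ E := by
    rw [← iUnion_diff, ← sUnion_eq_iUnion, hcc.2.2.2.1]
  rwa [h2] at h1

lemma cc_diff_finset {X : Type*} {S : Set (Set X)} (hS : IsIntervalSystem S) {A' : Set X}
    (hA' : A' ∈ S) (t : Finset (Set X)) (ht : ∀ E ∈ t, E ∈ S) :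
    ∃ D', IsCC S (A' \ ⋃₀ ↑t) D' := by
  classical
  induction t using Finset.induction_on with
  | empty => simpa using cc_base hA'
  | @insert E t' hEt' ih =>
    obtain ⟨D₀, hD₀⟩ := ih (fun E' hE' => ht E' (Finset.mem_insert_of_mem hE'))
    have h2 : A' \ ⋃₀ ↑(insert E t') = (A' \ ⋃₀ ↑t') \ E := by
      rw [Finset.coe_insert, sUnion_insert, diff_diff, union_comm]
    rw [h2]
    exact cc_diff hS hD₀ (ht E (Finset.mem_insert_self E t'))

lemma cc_extend {X : Type*} {S : Set (Set X)} {A' : Set X} (T : Set (Set X))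
    (hTd : T.PairwiseDisjoint id) (hTS : T ⊆ S) (hTc : T.Countable) (hT0 : ∅ ∉ T)
    (hTA : ⋃₀ T ⊆ A') {R : Set (Set X)} (hR : IsCC S (A' \ ⋃₀ T) R) :
    IsCC S A' (T ∪ R) := by
  have hTsub : ∀ d ∈ T, d ⊆ ⋃₀ T := fun d hd => subset_sUnion_of_mem hd
  have hRsub : ∀ d ∈ R, d ⊆ A' \ ⋃₀ T := fun d hd => hR.2.2.2.1 ▸ subset_sUnion_of_mem hd
  refine ⟨union_subset hTS hR.1, hTc.union hR.2.1, ?_, ?_, ?_⟩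
  · intro x hx y hy hxy
    rcases hx with hx | hx <;> rcases hy with hy | hy
    · exact hTd hx hy hxy
    · exact (disjoint_sdiff_self_right.mono (hTsub x hx) (hRsub y hy)).mono_right le_rfl
    · exact (disjoint_sdiff_self_left.mono (hRsub x hx) (hTsub y hy)).mono_right le_rfl
    · exact hR.2.2.1 hx hy hxy
  · rw [sUnion_union, hR.2.2.2.1, union_diff_cancel hTA]
  · rintro (h | h)
    · exact hT0 h
    · exact hR.2.2.2.2 h

lemma isAddMeasure_hasSum {X : Type*} {W : Type*} [AddCommMonoid W] [TopologicalSpace W]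
    {S : Set (Set X)} {μ : Set X → W} (hμ : IsAddMeasure S μ) {κ : Type*} [Countable κ]
    (E : κ → Set X) {B0 : Set X} (hB0 : B0 ∈ S) (hES : ∀ k, E k ∈ S)
    (hEd : Pairwise fun a b => Disjoint (E a) (E b)) (hEu : ⋃ k, E k = B0) :
    HasSum (fun k => μ (E k)) (μ B0) := by
  obtain ⟨f, hf⟩ := exists_injective_nat κ
  let e : κ ≃ Set.range f := Equiv.ofInjective f hf
  have h := hμ (Set.range f) (fun x => E (e.symm x)) B0 inferInstance hB0
    (fun x => hES _) (fun a b hab => hEd (e.symm.injective.ne hab))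
    ((e.symm.surjective.iUnion_comp E).trans hEu)
  exact (e.symm.hasSum_iff (f := fun k => μ (E k))).mp h

lemma measure_empty {X : Type*} {W : Type*} [AddCommMonoid W] [TopologicalSpace W] [T2Space W]
    {S : Set (Set X)} {μ : Set X → W} (hμ : IsAddMeasure S μ) (h0 : ∅ ∈ S) : μ ∅ = 0 := by
  have h := hμ Empty (fun x => x.elim) ∅ inferInstance h0 (fun i => i.elim)
    (fun i => i.elim) (by simp)
  exact (h.unique hasSum_empty)

lemma mem_closure_finsetSum {κ Z' : Type*} [AddCommMonoid Z'] [TopologicalSpace Z']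
    [ContinuousAdd Z'] (s : Finset κ) (a : κ → Z') (P : κ → Set Z')
    (h : ∀ j ∈ s, a j ∈ closure (P j)) :
    (∑ j ∈ s, a j) ∈
      closure {z | ∃ g : κ → Z', (∀ j ∈ s, g j ∈ P j) ∧ z = ∑ j ∈ s, g j} := by
  classical
  induction s using Finset.induction_on with
  | empty => exact subset_closure ⟨a, by simp, by simp⟩
  | @insert i s hi ih =>
    rw [Finset.sum_insert hi]
    have h1 : a i ∈ closure (P i) := h _ (Finset.mem_insert_self i s)
    have h2 := ih (fun j hj => h _ (Finset.mem_insert_of_mem hj))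
    refine map_mem_closure₂ continuous_add h1 h2 ?_
    rintro p hp q ⟨g, hg, rfl⟩
    refine ⟨Function.update g i p, ?_, ?_⟩
    · intro j hj
      rcases Finset.mem_insert.mp hj with rfl | hj
      · rw [Function.update_self]; exact hp
      · rw [Function.update_of_ne (ne_of_mem_of_not_mem hj hi)]; exact hg j hj
    · rw [Finset.sum_insert hi, Function.update_self]
      congr 1
      exact Finset.sum_congr rfl fun j hj =>
        (Function.update_of_ne (ne_of_mem_of_not_mem hj hi) _ _).symm

/-- The set of sums over finite disjoint families aligned with the tail pieces `B i`, `i ∉ Ξ`. -/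
def aligSet {X Z ι : Type*} [AddCommMonoid Z] (S : Set (Set X)) (ν : Set X → Z)
    (B : ι → Set X) (Ξ : Finset ι) : Set Z :=
  {z | ∃ t : Finset (Set X), (∀ E ∈ t, E ∈ S) ∧
    (∀ E ∈ t, E.Nonempty ∧ ∃ i, i ∉ Ξ ∧ E ⊆ B i) ∧
    (↑t : Set (Set X)).PairwiseDisjoint id ∧ z = ∑ E ∈ t, ν E}

lemma stepB_aux {X ι Z : Type*} [Countable ι] [AddCommGroup Z] [UniformSpace Z]
    [IsUniformAddGroup Z] {S : Set (Set X)} (hS : IsIntervalSystem S) (ν : Set X → Z)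
    (hνD : ∀ (D : Set (Set X)) (B0 : Set X), B0 ∈ S → D.Countable → D ⊆ S →
      D.PairwiseDisjoint id → ⋃₀ D = B0 → HasSum (fun d : D => ν ↑d) (ν B0))
    (B : ι → Set X) (hB : ∀ i, B i ∈ S)
    (hdisj : Pairwise fun i j => Disjoint (B i) (B j)) (Ξ : Finset ι)
    (n : ℕ) (E : Fin n → Set X) (hES : ∀ j, E j ∈ S)
    (hEsub : ∀ j, E j ⊆ ⋃ i, ⋃ (_ : i ∉ Ξ), B i)
    (hEdisj : Pairwise fun i j => Disjoint (E i) (E j)) :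
    (∑ j, ν (E j)) ∈ closure (aligSet S ν B Ξ) := by
  classical
  have hcov : ∀ (j : Fin n) (i : {i // i ∉ Ξ}), ∃ D, IsCC S (E j ∩ B ↑i) D :=
    fun j i => cc_of_inter hS (hES j) (hB ↑i)
  choose DD hDD using hcov
  set Dj : Fin n → Set (Set X) := fun j => ⋃ i, DD j i with hDj_def
  have hDj : ∀ j, IsCC S (E j) (Dj j) := by
    intro j
    have h1 : IsCC S (⋃ i : {i // i ∉ Ξ}, E j ∩ B ↑i) (⋃ i, DD j i) := by
      refine cc_iUnion _ _ (hDD j) ?_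
      intro a b hab
      exact (hdisj (fun h => hab (Subtype.ext h))).mono inter_subset_right inter_subset_right
    have h2 : (⋃ i : {i // i ∉ Ξ}, E j ∩ B ↑i) = E j := by
      rw [← inter_iUnion, inter_eq_left]
      refine (hEsub j).trans ?_
      rw [iUnion_subtype]
    rwa [h2] at h1
  have hDjmem : ∀ j, ∀ d ∈ Dj j, ∃ i, i ∉ Ξ ∧ d ⊆ B i := by
    intro j d hd
    obtain ⟨i, hi⟩ := mem_iUnion.mp hd
    refine ⟨↑i, i.2, (subset_sUnion_of_mem hi).trans ?_⟩
    rw [(hDD j i).2.2.2.1]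
    exact inter_subset_right
  have hDjsub : ∀ j, ∀ d ∈ Dj j, d ⊆ E j := fun j d hd =>
    (hDj j).2.2.2.1 ▸ subset_sUnion_of_mem hd
  have hsum_j : ∀ j, HasSum (fun d : (Dj j) => ν ↑d) (ν (E j)) := fun j =>
    hνD (Dj j) (E j) (hES j) (hDj j).2.1 (hDj j).1 (hDj j).2.2.1 (hDj j).2.2.2.1
  have hmem_cl : ∀ j, ν (E j) ∈
      closure {z | ∃ u : Finset (Dj j), z = ∑ d ∈ u, ν ↑d} := fun j =>
    mem_closure_of_tendsto (hsum_j j) (Filter.Eventually.of_forall fun u => ⟨u, rfl⟩)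
  have hbig := mem_closure_finsetSum Finset.univ (fun j => ν (E j))
    (fun j => {z | ∃ u : Finset (Dj j), z = ∑ d ∈ u, ν ↑d}) (fun j _ => hmem_cl j)
  refine closure_mono ?_ hbig
  rintro z ⟨g, hg, rfl⟩
  choose u hu using fun j => hg j (Finset.mem_univ j)
  have himg : ∀ j, ∀ d ∈ (u j).image (Subtype.val : (Dj j) → Set X), d ∈ Dj j := by
    intro j d hd
    obtain ⟨d', _, rfl⟩ := Finset.mem_image.mp hd
    exact d'.2
  have hfdisj : ∀ (j j' : Fin n), j ≠ j' →
      Disjoint ((u j).image Subtype.val) ((u j').image Subtype.val) := by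
    intro j j' hjj'
    rw [Finset.disjoint_left]
    intro d hd hd'
    have h1 : d ⊆ E j := hDjsub j d (himg j d hd)
    have h2 : d ⊆ E j' := hDjsub j' d (himg j' d hd')
    have : d = ∅ := by
      have := (hEdisj hjj').mono h1 h2
      simpa [disjoint_self] using this
    exact (hDj j).2.2.2.2 (this ▸ himg j d hd)
  refine ⟨Finset.univ.biUnion (fun j => (u j).image Subtype.val), ?_, ?_, ?_, ?_⟩
  · intro E' hE'
    obtain ⟨j, _, hE'⟩ := Finset.mem_biUnion.mp hE'
    exact (hDj j).1 (himg j E' hE')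
  · intro E' hE'
    obtain ⟨j, _, hE'⟩ := Finset.mem_biUnion.mp hE'
    have hmem := himg j E' hE'
    refine ⟨nonempty_iff_ne_empty.mpr ?_, hDjmem j E' hmem⟩
    rintro rfl; exact (hDj j).2.2.2.2 hmem
  · intro x hx y hy hxy
    simp only [Finset.coe_biUnion, Finset.coe_univ, mem_iUnion, Finset.mem_coe] at hx hy
    obtain ⟨j, -, hx⟩ := hx
    obtain ⟨j', -, hy⟩ := hy
    rcases eq_or_ne j j' with rfl | hjj'
    · exact (hDj j).2.2.1 (himg j x hx) (himg j y hy) hxy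
    · exact (hEdisj hjj').mono (hDjsub j x (himg j x hx)) (hDjsub j' y (himg j' y hy))
  · rw [Finset.sum_biUnion]
    · refine Finset.sum_congr rfl fun j _ => ?_
      rw [Finset.sum_image (fun a _ b _ h => Subtype.ext h)]
      exact hu j
    · intro j _ j' _ hjj'
      exact hfdisj j j' hjj'

lemma stepA_aux {X ι Z : Type*} [Countable ι] [AddCommGroup Z] [UniformSpace Z]
    [IsUniformAddGroup Z] {S : Set (Set X)} (hS : IsIntervalSystem S) (ν : Set X → Z)
    (hνD : ∀ (D : Set (Set X)) (B0 : Set X), B0 ∈ S → D.Countable → D ⊆ S →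
      D.PairwiseDisjoint id → ⋃₀ D = B0 → HasSum (fun d : D => ν ↑d) (ν B0))
    (A : Set X) (hA : A ∈ S) (B : ι → Set X) (hB : ∀ i, B i ∈ S)
    (hdisj : Pairwise fun i j => Disjoint (B i) (B j)) (hunion : (⋃ i, B i) = A) :
    ∀ U ∈ nhds (0 : Z), ∃ Ξ : Finset ι, aligSet S ν B Ξ ⊆ U := by
  classical
  intro U hU
  rcases isEmpty_or_nonempty ι with hι | hι
  · refine ⟨∅, ?_⟩
    rintro z ⟨t, h1, h2, h3, rfl⟩
    have ht : t = ∅ := Finset.eq_empty_of_forall_notMem fun E hE =>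
      (hι.false (h2 E hE).2.choose)
    rw [ht, Finset.sum_empty]
    exact mem_of_mem_nhds hU
  by_contra hcon
  push_neg at hcon
  have hcon' : ∀ Ξ : Finset ι, ∃ t : Finset (Set X), (∀ E ∈ t, E ∈ S) ∧
      (∀ E ∈ t, E.Nonempty ∧ ∃ i, i ∉ Ξ ∧ E ⊆ B i) ∧
      (↑t : Set (Set X)).PairwiseDisjoint id ∧ (∑ E ∈ t, ν E) ∉ U := by
    intro Ξ
    obtain ⟨z, hz, hzU⟩ := Set.not_subset.mp (hcon Ξ)
    obtain ⟨t, h1, h2, h3, rfl⟩ := hz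
    exact ⟨t, h1, h2, h3, hzU⟩
  choose bad hbad1 hbad2 hbad3 hbad4 using hcon'
  -- choice of an index for each member of a bad family
  let iCh : Finset ι → Set X → ι := fun Ξ E =>
    if hE : ∃ i, i ∉ Ξ ∧ E ⊆ B i then hE.choose else Classical.arbitrary ι
  have hiCh : ∀ (Ξ : Finset ι) (E : Set X), (∃ i, i ∉ Ξ ∧ E ⊆ B i) →
      iCh Ξ E ∉ Ξ ∧ E ⊆ B (iCh Ξ E) := by
    intro Ξ E hE
    simp only [iCh, dif_pos hE]
    exact hE.choose_spec
  let blk : Finset ι → Finset ι := fun Ξ => (bad Ξ).image (iCh Ξ)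
  let Ξs : ℕ → Finset ι := fun m => Nat.rec ∅ (fun _ Ξ => Ξ ∪ blk Ξ) m
  have hΞs : ∀ m, Ξs (m + 1) = Ξs m ∪ blk (Ξs m) := fun m => rfl
  have hmono : Monotone Ξs := monotone_nat_of_le_succ fun m => by
    rw [hΞs]; exact Finset.subset_union_left
  have hbadex : ∀ m, ∀ E ∈ bad (Ξs m), ∃ i, i ∉ Ξs m ∧ E ⊆ B i :=
    fun m E hE => (hbad2 (Ξs m) E hE).2
  have hblkstage : ∀ m i, i ∈ blk (Ξs m) → i ∉ Ξs m := by
    intro m i hi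
    obtain ⟨E, hE, rfl⟩ := Finset.mem_image.mp hi
    exact (hiCh (Ξs m) E (hbadex m E hE)).1
  have hblksucc : ∀ m i, i ∈ blk (Ξs m) → i ∈ Ξs (m + 1) := by
    intro m i hi
    rw [hΞs]
    exact Finset.mem_union_right _ hi
  have huniq : ∀ m m' i, i ∈ blk (Ξs m) → i ∈ blk (Ξs m') → m = m' := by
    have key : ∀ m m' i, m < m' → i ∈ blk (Ξs m) → i ∈ blk (Ξs m') → False := by
      intro m m' i hlt h1 h2
      exact hblkstage m' i h2 (hmono hlt (hblksucc m i h1))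
    intro m m' i h1 h2
    rcases lt_trichotomy m m' with h | h | h
    · exact absurd (key m m' i h h1 h2) not_false
    · exact h
    · exact absurd (key m' m i h h2 h1) not_false
  have crossdisj : ∀ m m', m ≠ m' → ∀ E ∈ bad (Ξs m), ∀ E' ∈ bad (Ξs m'),
      Disjoint E E' := by
    intro m m' hmm' E hE E' hE'
    have h1 := hiCh (Ξs m) E (hbadex m E hE)
    have h2 := hiCh (Ξs m') E' (hbadex m' E' hE')
    have hi1 : iCh (Ξs m) E ∈ blk (Ξs m) := Finset.mem_image_of_mem _ hE
    have hi2 : iCh (Ξs m') E' ∈ blk (Ξs m') := Finset.mem_image_of_mem _ hE'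
    have hne : iCh (Ξs m) E ≠ iCh (Ξs m') E' := by
      intro h
      exact hmm' (huniq m m' _ hi1 (h ▸ hi2))
    exact (hdisj hne).mono h1.2 h2.2
  -- assignment of bad members to indices
  let Asgn : ι → Finset (Set X) := fun i =>
    if h : ∃ m, i ∈ blk (Ξs m) then
      (bad (Ξs h.choose)).filter (fun E => iCh (Ξs h.choose) E = i)
    else ∅
  have hAsgn_mem : ∀ m, ∀ E ∈ bad (Ξs m), E ∈ Asgn (iCh (Ξs m) E) := by
    intro m E hE
    have hib : iCh (Ξs m) E ∈ blk (Ξs m) := Finset.mem_image_of_mem _ hE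
    have hex : ∃ m', iCh (Ξs m) E ∈ blk (Ξs m') := ⟨m, hib⟩
    have hch : hex.choose = m := huniq _ _ _ hex.choose_spec hib
    simp only [Asgn, dif_pos hex, hch, Finset.mem_filter]
    exact ⟨hE, trivial⟩
  have hAsgn_spec : ∀ i, ∀ E ∈ Asgn i,
      (∃ m, E ∈ bad (Ξs m)) ∧ E ∈ S ∧ E.Nonempty ∧ E ⊆ B i := by
    intro i E hE
    by_cases hex : ∃ m, i ∈ blk (Ξs m)
    · simp only [Asgn, dif_pos hex, Finset.mem_filter] at hE
      obtain ⟨hEbad, hEi⟩ := hE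
      refine ⟨⟨hex.choose, hEbad⟩, hbad1 _ E hEbad, (hbad2 _ E hEbad).1, ?_⟩
      have := (hiCh (Ξs hex.choose) E (hbadex _ E hEbad)).2
      rwa [hEi] at this
    · simp only [Asgn, dif_neg hex] at hE
      exact absurd hE (Finset.notMem_empty E)
  have hAsgn_pd : ∀ i, (↑(Asgn i) : Set (Set X)).PairwiseDisjoint id := by
    intro i
    by_cases hex : ∃ m, i ∈ blk (Ξs m)
    · refine (hbad3 (Ξs hex.choose)).subset ?_
      simp only [Asgn, dif_pos hex]
      intro x hx
      exact Finset.mem_coe.mpr (Finset.mem_of_mem_filter _ (Finset.mem_coe.mp hx))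
    · simp [Asgn, dif_neg hex]
  -- remainder covers
  have hRd : ∀ i, ∃ R, IsCC S (B i \ ⋃₀ ↑(Asgn i)) R := fun i =>
    cc_diff_finset hS (hB i) (Asgn i) (fun E hE => (hAsgn_spec i E hE).2.1)
  choose Rd hRdcc using hRd
  let Di : ι → Set (Set X) := fun i => ↑(Asgn i) ∪ Rd i
  have hDi : ∀ i, IsCC S (B i) (Di i) := by
    intro i
    refine cc_extend (A' := B i) (↑(Asgn i) : Set (Set X)) (hAsgn_pd i) ?_ ((Asgn i).countable_toSet) ?_ ?_ (hRdcc i)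
    · intro E hE; exact (hAsgn_spec i E (Finset.mem_coe.mp hE)).2.1
    · intro h0
      exact (hAsgn_spec i ∅ (Finset.mem_coe.mp h0)).2.2.1.ne_empty rfl
    · exact sUnion_subset fun E hE => (hAsgn_spec i E (Finset.mem_coe.mp hE)).2.2.2
  let DD : Set (Set X) := ⋃ i, Di i
  have hDD : IsCC S A DD := by
    have h1 := cc_iUnion B Di hDi hdisj
    rwa [hunion] at h1
  have hSum : HasSum (fun d : DD => ν ↑d) (ν A) :=
    hνD DD A hA hDD.2.1 hDD.1 hDD.2.2.1 hDD.2.2.2.1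
  have hC : CauchySeq (fun s : Finset DD => ∑ d ∈ s, ν ↑d) := hSum.cauchySeq
  obtain ⟨s₀, hs₀⟩ := cauchySeq_finset_iff_sum_vanishing.mp hC U hU
  -- embed the m-th bad family in DD
  have hmemDD : ∀ m, ∀ E ∈ bad (Ξs m), E ∈ DD := by
    intro m E hE
    exact mem_iUnion.mpr ⟨iCh (Ξs m) E, Or.inl (Finset.mem_coe.mpr (hAsgn_mem m E hE))⟩
  let tm : ℕ → Finset DD := fun m =>
    (bad (Ξs m)).attach.map
      ⟨fun E => ⟨E.1, hmemDD m E.1 E.2⟩, fun a b h => Subtype.ext (by simpa using congrArg Subtype.val h)⟩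
  have htm_mem : ∀ m (d : DD), d ∈ tm m → (d : Set X) ∈ bad (Ξs m) := by
    intro m d hd
    obtain ⟨E, -, rfl⟩ := Finset.mem_map.mp hd
    exact E.2
  have htm_sum : ∀ m, ∑ d ∈ tm m, ν ↑d = ∑ E ∈ bad (Ξs m), ν E := by
    intro m
    rw [Finset.sum_map]
    exact Finset.sum_attach _ _
  have hnotU : ∀ m, (∑ d ∈ tm m, ν ↑d) ∉ U := fun m =>
    (htm_sum m) ▸ hbad4 (Ξs m)
  -- find a bad family disjoint from s₀
  have hex_disj : ∃ m, Disjoint (tm m) s₀ := by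
    by_contra hnd
    push_neg at hnd
    have : ∀ m, ∃ d : DD, d ∈ tm m ∧ d ∈ s₀ := by
      intro m
      obtain ⟨d, h1, h2⟩ := Finset.not_disjoint_iff.mp (hnd m)
      exact ⟨d, h1, h2⟩
    choose dm hdm1 hdm2 using this
    have : ∃ m m', m ≠ m' ∧ (⟨dm m, hdm2 m⟩ : s₀) = ⟨dm m', hdm2 m'⟩ :=
      Finite.exists_ne_map_eq_of_infinite (fun m => (⟨dm m, hdm2 m⟩ : s₀))
    obtain ⟨m, m', hmm', heq⟩ := this
    have hdd : dm m = dm m' := congrArg Subtype.val heq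
    have h1 : (dm m : Set X) ∈ bad (Ξs m) := htm_mem m _ (hdm1 m)
    have h2 : (dm m : Set X) ∈ bad (Ξs m') := hdd ▸ htm_mem m' _ (hdm1 m')
    have hd := crossdisj m m' hmm' _ h1 _ h2
    rw [disjoint_self] at hd
    exact ((hbad2 (Ξs m) _ h1).1.ne_empty) hd
  obtain ⟨m, hm⟩ := hex_disj
  exact hnotU m (hs₀ (tm m) hm)

/-- Let `A ∈ S` be decomposed as a countable pairwise disjoint union
`A = ⋃ i, B i` of members of `S`, and let `c ∈ V`. Then for every neighborhood `T` of `0`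
in `Z` there is a finite set `Ξ` of indices such that
`svar(L, c, ⋃_{i ∉ Ξ} B i, μ) ⊆ T`. -/
theorem statement7 {X V W Z : Type*}
    [AddCommGroup V] [UniformSpace V] [IsUniformAddGroup V] [CompleteSpace V] [T2Space V]
    [AddCommGroup W] [UniformSpace W] [IsUniformAddGroup W] [CompleteSpace W] [T2Space W]
    [AddCommGroup Z] [UniformSpace Z] [IsUniformAddGroup Z] [CompleteSpace Z] [T2Space Z]
    (S : Set (Set X)) (hS : IsIntervalSystem S)
    (L : V → W → Z)
    (hL1 : ∀ v₁ v₂ w, L (v₁ + v₂) w = L v₁ w + L v₂ w)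
    (hL2 : ∀ v w₁ w₂, L v (w₁ + w₂) = L v w₁ + L v w₂)
    (hLc : ∀ v, Continuous fun w => L v w)
    (μ : Set X → W) (hμ : IsAddMeasure S μ)
    (A : Set X) (hA : A ∈ S) (ι : Type*) [Countable ι]
    (B : ι → Set X) (hB : ∀ i, B i ∈ S)
    (hdisj : Pairwise fun i j => Disjoint (B i) (B j))
    (hunion : (⋃ i, B i) = A) (c : V) :
    ∀ T ∈ nhds (0 : Z), ∃ Ξ : Finset ι,
      svarSet S L μ c (⋃ (i : ι) (_ : i ∉ Ξ), B i) ⊆ T := by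
  classical
  set ν : Set X → Z := fun E => L c (μ E) with hν_def
  have hνD : ∀ (D : Set (Set X)) (B0 : Set X), B0 ∈ S → D.Countable → D ⊆ S →
      D.PairwiseDisjoint id → ⋃₀ D = B0 → HasSum (fun d : D => ν ↑d) (ν B0) := by
    intro D B0 hB0 hDc hDS hDd hDu
    have : Countable ↥D := hDc.to_subtype
    have h1 : HasSum (fun d : D => μ ↑d) (μ B0) :=
      isAddMeasure_hasSum hμ (fun d : D => (d : Set X)) hB0 (fun d => hDS d.2)
        (fun a b hab => hDd a.2 b.2 (fun h => hab (Subtype.ext h)))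
        (by rw [← Set.sUnion_eq_iUnion]; exact hDu)
    exact h1.map (AddMonoidHom.mk' (fun w => L c w) (hL2 c)) (hLc c)
  intro T hT
  obtain ⟨T₀, hT₀n, hT₀c, hT₀T⟩ := exists_mem_nhds_isClosed_subset hT
  obtain ⟨Ξ, hΞ⟩ := stepA_aux hS ν hνD A hA B hB hdisj hunion T₀ hT₀n
  refine ⟨Ξ, ?_⟩
  have hcl : closure (aligSet S ν B Ξ) ⊆ T₀ := by
    rw [← hT₀c.closure_eq]; exact closure_mono hΞ
  have hgen : { z : Z | ∃ (n : ℕ) (E : Fin n → Set X), (∀ j, E j ∈ S) ∧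
      (∀ j, E j ⊆ ⋃ i, ⋃ (_ : i ∉ Ξ), B i) ∧ (Pairwise fun i j => Disjoint (E i) (E j)) ∧
      z = ∑ j, L c (μ (E j)) } ⊆ T₀ := by
    rintro z ⟨n, E, h1, h2, h3, rfl⟩
    exact hcl (stepB_aux hS ν hνD B hB hdisj Ξ n E h1 h2 h3)
  exact (closure_minimal hgen hT₀c).trans hT₀T
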